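/- Let K : ℂ → Matrix (Fin n) (Fin n) ℂ, B : ℂ → Matrix (Fin n) (Fin m) ℂ, C : ℂ → Matrix (Fin p) (Fin n) ℂ, and σ₁, σ₂ ∈ ℂ with K(σ₁), K(σ₂) invertible. Suppose V contains K(σ₁)⁻¹B(σ₁) in its column span, W contains (K(σ₂)⁻¹)ᴴ(C(σ₂))ᴴ in its column span, and both Wᴴ K(σ₁) V and Wᴴ K(σ₂) V are invertible. Then the reduced linear transfer function Ĝ(s) = (C(s)V)(WᴴK(s)V)⁻¹(WᴴB(s)) satisfies Ĝ(σ₁) = G(σ₁) and Ĝ(σ₂) = G(σ₂), where G(s) = C(s)K(s)⁻¹B(s). -/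

import Mathlib

open Matrix Kronecker

theorem stmt_15 {n m p r : ℕ}
    (K : ℂ → Matrix (Fin n) (Fin n) ℂ)
    (B : ℂ → Matrix (Fin n) (Fin m) ℂ)
    (C : ℂ → Matrix (Fin p) (Fin n) ℂ)
    (σ₁ σ₂ : ℂ) (hK1 : IsUnit (K σ₁)) (hK2 : IsUnit (K σ₂))
    (V W : Matrix (Fin n) (Fin r) ℂ)
    (hVspan : ∃ X, V * X = (K σ₁)⁻¹ * B σ₁)
    (hWspan : ∃ X, W * X = ((K σ₂)⁻¹)ᴴ * (C σ₂)ᴴ)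
    (hKhat1 : IsUnit (Wᴴ * K σ₁ * V)) (hKhat2 : IsUnit (Wᴴ * K σ₂ * V)) :
    (C σ₁ * V) * (Wᴴ * K σ₁ * V)⁻¹ * (Wᴴ * B σ₁) = C σ₁ * (K σ₁)⁻¹ * B σ₁ ∧
      (C σ₂ * V) * (Wᴴ * K σ₂ * V)⁻¹ * (Wᴴ * B σ₂) = C σ₂ * (K σ₂)⁻¹ * B σ₂ := by
  obtain ⟨X, hX⟩ : ∃ X : Matrix (Fin r) (Fin m) ℂ, V * X = (K σ₁)⁻¹ * B σ₁ := hVspan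
  obtain ⟨Y, hY⟩ : ∃ X : Matrix (Fin r) (Fin p) ℂ, W * X = ((K σ₂)⁻¹)ᴴ * (C σ₂)ᴴ := hWspan
  have hd1 : IsUnit (Wᴴ * K σ₁ * V).det := (Matrix.isUnit_iff_isUnit_det _).mp hKhat1
  have hd2 : IsUnit (Wᴴ * K σ₂ * V).det := (Matrix.isUnit_iff_isUnit_det _).mp hKhat2
  have hK1d : IsUnit (K σ₁).det := (Matrix.isUnit_iff_isUnit_det _).mp hK1
  have hK2d : IsUnit (K σ₂).det := (Matrix.isUnit_iff_isUnit_det _).mp hK2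
  constructor
  · have hWB : Wᴴ * K σ₁ * V * X = Wᴴ * B σ₁ := by
      rw [Matrix.mul_assoc (Wᴴ * K σ₁), hX, Matrix.mul_assoc Wᴴ,
        ← Matrix.mul_assoc (K σ₁), Matrix.mul_nonsing_inv _ hK1d, Matrix.one_mul]
    calc (C σ₁ * V) * (Wᴴ * K σ₁ * V)⁻¹ * (Wᴴ * B σ₁)
        = C σ₁ * V * ((Wᴴ * K σ₁ * V)⁻¹ * (Wᴴ * K σ₁ * V) * X) := by
          rw [Matrix.mul_assoc (C σ₁ * V), Matrix.mul_assoc ((Wᴴ * K σ₁ * V)⁻¹), hWB]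
      _ = C σ₁ * (V * X) := by
          rw [Matrix.nonsing_inv_mul _ hd1, Matrix.one_mul, Matrix.mul_assoc]
      _ = C σ₁ * (K σ₁)⁻¹ * B σ₁ := by rw [hX, ← Matrix.mul_assoc]
  · have hC : Yᴴ * Wᴴ = C σ₂ * (K σ₂)⁻¹ := by
      have := congrArg Matrix.conjTranspose hY
      simpa [Matrix.conjTranspose_mul] using this
    have hC2 : C σ₂ = Yᴴ * Wᴴ * K σ₂ := by
      rw [hC, Matrix.mul_assoc, Matrix.nonsing_inv_mul _ hK2d, Matrix.mul_one]
    have hCV : C σ₂ * V = Yᴴ * (Wᴴ * K σ₂ * V) := by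
      rw [hC2]; simp only [Matrix.mul_assoc]
    calc (C σ₂ * V) * (Wᴴ * K σ₂ * V)⁻¹ * (Wᴴ * B σ₂)
        = Yᴴ * ((Wᴴ * K σ₂ * V) * (Wᴴ * K σ₂ * V)⁻¹) * (Wᴴ * B σ₂) := by
          rw [hCV, Matrix.mul_assoc Yᴴ]
      _ = Yᴴ * Wᴴ * B σ₂ := by
          rw [Matrix.mul_nonsing_inv _ hd2, Matrix.mul_one]
          simp only [Matrix.mul_assoc]
      _ = C σ₂ * (K σ₂)⁻¹ * B σ₂ := by rw [hC]
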